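/- Let U be a finite-dimensional ℂ-vector space, π a representation of the Lie algebra Vir_{≥0} = span{L_j : j ≥ 0} (with [L_i,L_j] = (i-j)L_{i+j}) on U, and A ∈ End(U) commuting with all π(L_j). Then ℂ[∂] ⊗ U with L_{(0)}u = (∂ + A)u and L_{(j)}u = π(L_{j-1})u for j ≥ 1, u ∈ U (extended by (M2)), is a module over the Virasoro conformal algebra, i.e. satisfies (M0)-(M2). -/

import Mathlib

open Finset

/-- A conformal algebra over ℂ: a ℂ[∂]-module (a ℂ-module together with the action `D` of ∂)
with ℂ-bilinear `n`-th products `mul n` for `n ∈ ℤ₊`, satisfying axioms (C0)-(C3).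
Here, by convention, `mul (n-1)` for `n = 0` occurs only with coefficient `n = 0`. -/
structure ConformalAlgebra (R : Type*) [AddCommGroup R] [Module ℂ R] where
  /-- the action of `∂` -/
  D : R →ₗ[ℂ] R
  /-- the `n`-th products `a_{(n)} b` -/
  mul : ℕ → R →ₗ[ℂ] R →ₗ[ℂ] R
  /-- (C0) `a_{(n)} b = 0` for `n ≫ 0` -/
  c0 : ∀ a b : R, ∃ N : ℕ, ∀ n ≥ N, mul n a b = 0
  /-- (C1) `(∂a)_{(n)} b = -n a_{(n-1)} b` -/
  c1 : ∀ (n : ℕ) (a b : R), mul n (D a) b = -(n : ℂ) • mul (n - 1) a b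
  /-- (C2) `a_{(n)} b = ∑_{j≥0} (-1)^{j+n+1} (∂^j / j!) (b_{(n+j)} a)` (a finite sum by (C0)) -/
  c2 : ∀ (n : ℕ) (a b : R) (N : ℕ), (∀ j ≥ N, mul (n + j) b a = 0) →
    mul n a b = ∑ j ∈ range N,
      ((-1 : ℂ) ^ (j + n + 1) * ((j.factorial : ℂ))⁻¹) • (⇑D)^[j] (mul (n + j) b a)
  /-- (C3) the conformal Jacobi identity -/
  c3 : ∀ (m n : ℕ) (a b c : R),
    mul m a (mul n b c) = (∑ j ∈ range (m + 1), ((m.choose j : ℂ)) •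
      mul (m + n - j) (mul j a b) c) + mul n b (mul m a c)

variable {R : Type*} [AddCommGroup R] [Module ℂ R]

/-- A module over a conformal algebra `S` on `R`: a `ℂ[∂]`-module `M` (with `∂` acting by
`DM`) together with ℂ-bilinear actions `act n`, `n ∈ ℤ₊`, satisfying (M0)-(M2). -/
structure ConformalModule (S : ConformalAlgebra R) (M : Type*)
    [AddCommGroup M] [Module ℂ M] where
  /-- the action of `∂` on `M` -/
  DM : M →ₗ[ℂ] M
  /-- the `n`-th actions `a_{(n)}^M` -/
  act : ℕ → R →ₗ[ℂ] M →ₗ[ℂ] M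
  /-- (M0) `a_{(n)}^M v = 0` for `n ≫ 0` -/
  m0 : ∀ (a : R) (v : M), ∃ N : ℕ, ∀ n ≥ N, act n a v = 0
  /-- (M1) `[a_{(m)}^M, b_{(n)}^M] = ∑_j C(m,j) (a_{(j)}b)_{(m+n-j)}^M` -/
  m1 : ∀ (m n : ℕ) (a b : R) (v : M),
    act m a (act n b v) - act n b (act m a v)
      = ∑ j ∈ range (m + 1), ((m.choose j : ℂ)) • act (m + n - j) (S.mul j a b) v
  /-- (M2) `(∂a)_{(n)}^M = -n a_{(n-1)}^M` -/
  m2a : ∀ (n : ℕ) (a : R) (v : M), act n (S.D a) v = -(n : ℂ) • act (n - 1) a v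
  /-- (M2) `[∂, a_{(n)}^M] = -n a_{(n-1)}^M` -/
  m2b : ∀ (n : ℕ) (a : R) (v : M),
    DM (act n a v) - act n a (DM v) = -(n : ℂ) • act (n - 1) a v

/- The Virasoro conformal algebra `ℂ[∂]L` is realized on `ℕ →₀ ℂ` with `∂` the shift and
`L = Finsupp.single 0 1`; the module `ℂ[∂] ⊗ U` is realized as `ℕ →₀ U` similarly. -/

/-- The action of `∂` on `ℂ[∂] ⊗ U ≅ ℕ →₀ U`. -/
noncomputable def shiftD (U : Type*) [AddCommGroup U] [Module ℂ U] :
    (ℕ →₀ U) →ₗ[ℂ] (ℕ →₀ U) := Finsupp.lmapDomain U ℂ (· + 1)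

/-- The generator `L` of the Virasoro conformal algebra. -/
noncomputable def virL : ℕ →₀ ℂ := Finsupp.single 0 1

namespace VirAux

variable {U : Type*} [AddCommGroup U] [Module ℂ U]

lemma shiftD_single (k : ℕ) (u : U) :
    shiftD U (Finsupp.single k u) = Finsupp.single (k + 1) u := by
  simp [shiftD, Finsupp.mapDomain_single]

variable (A : Module.End ℂ U) (π : ℕ → Module.End ℂ U)

noncomputable def g : ℕ → U →ₗ[ℂ] (ℕ →₀ U)
  | 0 => Finsupp.lsingle 1 + (Finsupp.lsingle 0).comp A
  | (j + 1) => (Finsupp.lsingle 0).comp (π j)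

noncomputable def f : ℕ → ℕ → U →ₗ[ℂ] (ℕ →₀ U)
  | n, 0 => g A π n
  | n, (k + 1) => (shiftD U).comp (f n k) + (n : ℂ) • f (n - 1) k

lemma f_zero (n : ℕ) : f A π n 0 = g A π n := rfl

lemma f_succ (n k : ℕ) (u : U) :
    f A π n (k + 1) u = shiftD U (f A π n k u) + (n : ℂ) • f A π (n - 1) k u := by
  simp [f]

noncomputable def T (n : ℕ) : (ℕ →₀ U) →ₗ[ℂ] (ℕ →₀ U) := Finsupp.lsum ℂ (f A π n)

lemma T_single (n k : ℕ) (u : U) : T A π n (Finsupp.single k u) = f A π n k u :=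
  Finsupp.lsum_single ℂ _ _ _

lemma T_shift (n : ℕ) (x : ℕ →₀ U) :
    T A π n (shiftD U x) = shiftD U (T A π n x) + (n : ℂ) • T A π (n - 1) x := by
  have h : (T A π n).comp (shiftD U)
      = (shiftD U).comp (T A π n) + (n : ℂ) • T A π (n - 1) := by
    apply Finsupp.lhom_ext
    intro k u
    simp only [LinearMap.comp_apply, shiftD_single, T_single, LinearMap.add_apply,
      LinearMap.smul_apply]
    rw [show k + 1 = k + 1 from rfl]
    exact f_succ A π n k u
  simpa using DFunLike.congr_fun h x

lemma shift_T (n : ℕ) (x : ℕ →₀ U) :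
    shiftD U (T A π n x) - T A π n (shiftD U x) = -(n : ℂ) • T A π (n - 1) x := by
  rw [T_shift]; module

variable {A} {π}

lemma g_zero_apply (u : U) : g A π 0 u = Finsupp.single 1 u + Finsupp.single 0 (A u) := by
  simp [g]

lemma g_succ_apply (j : ℕ) (u : U) : g A π (j + 1) u = Finsupp.single 0 (π j u) := by
  simp [g]

section comm
variable (hπ : ∀ i j : ℕ, π i * π j - π j * π i = ((i : ℂ) - (j : ℂ)) • π (i + j))
  (hA : ∀ j : ℕ, A * π j = π j * A)
include hπ hA

lemma comm_f : ∀ (k m n : ℕ) (u : U),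
    T A π m (f A π n k u) - T A π n (f A π m k u)
      = ((m : ℂ) - (n : ℂ)) • f A π (m + n - 1) k u := by
  intro k
  induction k with
  | zero =>
    have key : ∀ (i : ℕ) (u : U),
        T A π (i + 1) (f A π 0 0 u) - T A π 0 (f A π (i + 1) 0 u)
          = ((i : ℂ) + 1) • f A π i 0 u := by
      intro i u
      have hAu : A (π i u) = π i (A u) := by
        simpa [Module.End.mul_apply] using DFunLike.congr_fun (hA i) u
      simp only [f_zero, g_zero_apply, g_succ_apply, map_add, T_single, f_succ, f_zero,
        shiftD_single, Nat.add_sub_cancel, hAu]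
      push_cast
      module
    intro m n u
    rcases m with _ | i <;> rcases n with _ | j
    · simp
    · have h := key j u
      rw [show (0 : ℕ) + (j + 1) - 1 = j from by omega]
      have h2 : T A π 0 (f A π (j + 1) 0 u) - T A π (j + 1) (f A π 0 0 u)
          = -(((j : ℂ) + 1) • f A π j 0 u) := by rw [← h]; abel
      rw [h2]; push_cast; module
    · have h := key i u
      rw [show (i + 1) + 0 - 1 = i from by omega]
      rw [h]; push_cast; module
    · have h := DFunLike.congr_fun (hπ i j) u
      simp only [LinearMap.sub_apply, LinearMap.smul_apply, Module.End.mul_apply] at h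
      simp only [f_zero, g_succ_apply, T_single]
      rw [show (i + 1) + (j + 1) - 1 = (i + j) + 1 from by omega]
      rw [g_succ_apply, ← Finsupp.single_sub, h, Finsupp.smul_single]
      congr 1
      push_cast
      ring
  | succ k ih =>
    intro m n u
    rcases m with _ | i <;> rcases n with _ | j
    · simp
    · -- m = 0, n = j+1
      rw [show (0 : ℕ) + (j + 1) - 1 = j from by omega]
      rw [f_succ, f_succ, f_succ]
      simp only [map_add, map_smul, Nat.cast_zero, zero_smul, add_zero, Nat.add_sub_cancel]
      rw [T_shift, T_shift]
      simp only [Nat.cast_zero, zero_smul, add_zero]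
      have e := ih 0 (j + 1) u
      rw [show (0 : ℕ) + (j + 1) - 1 = j from by omega] at e
      have h1 := congrArg (shiftD U) e
      rw [map_sub, map_smul] at h1
      have h2 := ih 0 j u
      rw [show (0 : ℕ) + j - 1 = j - 1 from by omega] at h2
      push_cast at h1 h2 ⊢
      linear_combination (norm := module) h1 + ((j : ℂ) + 1) • h2
    · -- m = i+1, n = 0
      rw [show (i + 1) + 0 - 1 = i from by omega]
      rw [f_succ, f_succ, f_succ]
      simp only [map_add, map_smul, Nat.cast_zero, zero_smul, add_zero, Nat.add_sub_cancel]
      rw [T_shift, T_shift]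
      simp only [Nat.cast_zero, zero_smul, add_zero]
      have e := ih (i + 1) 0 u
      rw [show (i + 1) + 0 - 1 = i from by omega] at e
      have h1 := congrArg (shiftD U) e
      rw [map_sub, map_smul] at h1
      have h2 := ih i 0 u
      rw [show i + 0 - 1 = i - 1 from by omega] at h2
      push_cast at h1 h2 ⊢
      linear_combination (norm := module) h1 + ((i : ℂ) + 1) • h2
    · -- m = i+1, n = j+1
      rw [show (i + 1) + (j + 1) - 1 = (i + j) + 1 from by omega]
      rw [f_succ, f_succ, f_succ]
      simp only [map_add, map_smul, Nat.add_sub_cancel]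
      rw [T_shift, T_shift]
      simp only [Nat.add_sub_cancel]
      have e := ih (i + 1) (j + 1) u
      rw [show (i + 1) + (j + 1) - 1 = (i + j) + 1 from by omega] at e
      have h1 := congrArg (shiftD U) e
      rw [map_sub, map_smul] at h1
      have h2 := ih i (j + 1) u
      rw [show i + (j + 1) - 1 = i + j from by omega] at h2
      have h3 := ih (i + 1) j u
      rw [show (i + 1) + j - 1 = i + j from by omega] at h3
      push_cast at h1 h2 h3 ⊢
      linear_combination (norm := module) h1 + ((i : ℂ) + 1) • h2 + ((j : ℂ) + 1) • h3

lemma comm_T (m n : ℕ) (v : ℕ →₀ U) :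
    T A π m (T A π n v) - T A π n (T A π m v) = ((m : ℂ) - (n : ℂ)) • T A π (m + n - 1) v := by
  induction v using Finsupp.induction_linear with
  | zero => simp
  | add x y h1 h2 =>
    simp only [map_add, smul_add]
    rw [← h1, ← h2]; abel
  | single k u => simpa [T_single] using comm_f hπ hA k m n u

end comm

lemma descFact_mul (n p : ℕ) : n.descFactorial (p + 1) = n * ((n - 1).descFactorial p) := by
  cases n with
  | zero => simp
  | succ m => simpa using Nat.succ_descFactorial_succ m p

lemma descFact_mul' (n p : ℕ) : (n - p) * n.descFactorial p = n * ((n - 1).descFactorial p) := by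
  rw [← Nat.descFactorial_succ, descFact_mul]

variable (A) (π)

/-- The `n`-th action of a general element of the Virasoro conformal algebra. -/
noncomputable def act (n : ℕ) : (ℕ →₀ ℂ) →ₗ[ℂ] (ℕ →₀ U) →ₗ[ℂ] (ℕ →₀ U) :=
  Finsupp.lsum ℂ fun p => LinearMap.toSpanSingleton ℂ _
    (((-1 : ℂ) ^ p * (n.descFactorial p : ℂ)) • T A π (n - p))

variable {A} {π}

lemma act_single (n p : ℕ) (c : ℂ) :
    act A π n (Finsupp.single p c)
      = (c * ((-1 : ℂ) ^ p * (n.descFactorial p : ℂ))) • T A π (n - p) := by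
  rw [act, Finsupp.lsum_single, LinearMap.toSpanSingleton_apply, smul_smul]

lemma act_virL (n : ℕ) : act A π n virL = T A π n := by
  rw [virL, act_single]
  simp

lemma act_shift (n : ℕ) (a : ℕ →₀ ℂ) :
    act A π n (shiftD ℂ a) = -(n : ℂ) • act A π (n - 1) a := by
  have h : (act A π n (U := U)).comp (shiftD ℂ) = -(n : ℂ) • act A π (n - 1) := by
    apply Finsupp.lhom_ext
    intro p c
    simp only [LinearMap.comp_apply, LinearMap.smul_apply, shiftD_single, act_single]
    rw [show n - (p + 1) = n - 1 - p from by omega]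
    rw [smul_smul]
    congr 1
    rw [pow_succ, descFact_mul]
    push_cast
    ring
  exact DFunLike.congr_fun h a

/-- The axiom (M2b) for `act`. -/
lemma act_m2b (n : ℕ) (a : ℕ →₀ ℂ) (v : ℕ →₀ U) :
    shiftD U (act A π n a v) - act A π n a (shiftD U v) = -(n : ℂ) • act A π (n - 1) a v := by
  induction a using Finsupp.induction_linear with
  | zero => simp
  | add x y h1 h2 =>
    simp only [map_add, LinearMap.add_apply, map_add]
    rw [smul_add, ← h1, ← h2]; abel
  | single p c =>
    simp only [act_single, LinearMap.smul_apply, map_smul]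
    rw [← smul_sub, shift_T]
    rw [show n - p - 1 = n - 1 - p from by omega]
    rw [smul_smul, smul_smul]
    congr 1
    have : ((n - p : ℕ) : ℂ) * ((n.descFactorial p : ℕ) : ℂ)
        = (n : ℂ) * (((n - 1).descFactorial p : ℕ) : ℂ) := by
      rw [← Nat.cast_mul, ← Nat.cast_mul, descFact_mul']
    calc c * ((-1 : ℂ) ^ p * (n.descFactorial p : ℂ)) * -((n - p : ℕ) : ℂ)
        = -(c * ((-1 : ℂ) ^ p) * (((n - p : ℕ) : ℂ) * (n.descFactorial p : ℂ))) := by ring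
      _ = -(c * ((-1 : ℂ) ^ p) * ((n : ℂ) * ((n - 1).descFactorial p : ℂ))) := by rw [this]
      _ = -(n : ℂ) * (c * ((-1 : ℂ) ^ p * ((n - 1).descFactorial p : ℂ))) := by ring

section vanish
variable {J : ℕ} (hJ : ∀ j, J ≤ j → π j = 0)
include hJ

lemma f_eq_zero : ∀ k n, k + J + 1 ≤ n → f A π n k = 0 := by
  intro k
  induction k with
  | zero =>
    intro n hn
    obtain ⟨n', rfl⟩ : ∃ n', n = n' + 1 := ⟨n - 1, by omega⟩
    show g A π (n' + 1) = 0
    show (Finsupp.lsingle 0).comp (π n') = 0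
    rw [hJ n' (by omega), LinearMap.comp_zero]
  | succ k ih =>
    intro n hn
    show (shiftD U).comp (f A π n k) + (n : ℂ) • f A π (n - 1) k = 0
    rw [ih n (by omega), ih (n - 1) (by omega), LinearMap.comp_zero, smul_zero, add_zero]

lemma T_eq_zero (n : ℕ) (v : ℕ →₀ U) (h : ∀ k ∈ v.support, k + J + 1 ≤ n) :
    T A π n v = 0 := by
  rw [T, Finsupp.lsum_apply, Finsupp.sum]
  apply Finset.sum_eq_zero
  intro k hk
  rw [f_eq_zero hJ k n (h k hk)]
  rfl

lemma act_eq_zero (a : ℕ →₀ ℂ) (v : ℕ →₀ U) :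
    ∀ n, (a.support.sup id) + (v.support.sup id) + J + 1 ≤ n → act A π n a v = 0 := by
  intro n hn
  have expand : act A π n a v
      = ∑ p ∈ a.support, (a p * ((-1 : ℂ) ^ p * (n.descFactorial p : ℂ))) • T A π (n - p) v := by
    rw [act, Finsupp.lsum_apply, Finsupp.sum, LinearMap.coe_sum, Finset.sum_apply]
    apply Finset.sum_congr rfl
    intro p _
    rw [LinearMap.toSpanSingleton_apply, smul_smul]
    rfl
  rw [expand]
  apply Finset.sum_eq_zero
  intro p hp
  have h1 : p ≤ a.support.sup id := Finset.le_sup (f := id) hp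
  rw [T_eq_zero hJ (n - p) v ?_, smul_zero]
  intro k hk
  have h2 : k ≤ v.support.sup id := Finset.le_sup (f := id) hk
  omega

end vanish

end VirAux

lemma pi_vanish {U : Type*} [AddCommGroup U] [Module ℂ U] [FiniteDimensional ℂ U]
    (π : ℕ → Module.End ℂ U)
    (hπ : ∀ i j : ℕ, π i * π j - π j * π i = ((i : ℂ) - (j : ℂ)) • π (i + j)) :
    ∃ J : ℕ, ∀ j, J ≤ j → π j = 0 := by
  by_contra hc
  push_neg at hc
  set s : Set ℕ := {j | π j ≠ 0} with hs_def
  have hs : s.Infinite := by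
    apply Set.infinite_of_not_bddAbove
    rintro ⟨J, hJ⟩
    obtain ⟨j, hj1, hj2⟩ := hc (J + 1)
    have : j ≤ J := hJ hj2
    omega
  haveI := hs.to_subtype
  set B : Module.End ℂ (Module.End ℂ U) :=
    LinearMap.mulLeft ℂ (π 0) - LinearMap.mulRight ℂ (π 0) with hB_def
  have hB : ∀ j : ℕ, B (π j) = (-(j : ℂ)) • π j := by
    intro j
    have h := hπ 0 j
    simp only [Nat.cast_zero, zero_sub, zero_add] at h
    simp only [hB_def, LinearMap.sub_apply, LinearMap.mulLeft_apply, LinearMap.mulRight_apply]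
    rw [← h]
  have li := Module.End.eigenvectors_linearIndependent' B
      (fun j : s => -((j : ℕ) : ℂ)) ?inj (fun j : s => π j) ?eig
  · exact Module.Finite.not_linearIndependent_of_infinite _ li
  case inj =>
    intro j k h
    simp only [neg_inj, Nat.cast_inj] at h
    exact Subtype.ext h
  case eig =>
    intro j
    exact Module.End.hasEigenvector_iff.mpr
      ⟨Module.End.mem_eigenspace_iff.mpr (hB j), j.2⟩

section mulD
variable {R : Type*} [AddCommGroup R] [Module ℂ R]

lemma iter_smul (D : R →ₗ[ℂ] R) (j : ℕ) (c : ℂ) (x : R) :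
    (⇑D)^[j] (c • x) = c • (⇑D)^[j] x := by
  induction j generalizing x with
  | zero => rfl
  | succ j ih => rw [Function.iterate_succ_apply, map_smul, ih, Function.iterate_succ_apply]

lemma mulD (S : ConformalAlgebra R) (n : ℕ) (a b : R) :
    S.mul n a (S.D b) = S.D (S.mul n a b) + (n : ℂ) • S.mul (n - 1) a b := by
  obtain ⟨N, hN⟩ := S.c0 b a
  have e1 := S.c2 n a (S.D b) (N + 1) ?hv1
  case hv1 =>
    intro j hj
    rw [S.c1, hN (n + j - 1) (by omega), smul_zero]
  have e1' : S.mul n a (S.D b) = ∑ j ∈ range (N + 1),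
      ((-1 : ℂ) ^ (j + n + 1) * ((j.factorial : ℂ))⁻¹ * (-((n + j : ℕ) : ℂ))) •
        (⇑S.D)^[j] (S.mul (n + j - 1) b a) := by
    rw [e1]
    apply Finset.sum_congr rfl
    intro j _
    rw [S.c1, iter_smul, smul_smul]
  have e2 := S.c2 n a b N (fun j hj => hN (n + j) (by omega))
  have e3 : (n : ℂ) • S.mul (n - 1) a b
      = ∑ j ∈ range (N + 1),
          ((n : ℂ) * ((-1 : ℂ) ^ (j + n) * ((j.factorial : ℂ))⁻¹)) •
            (⇑S.D)^[j] (S.mul (n - 1 + j) b a) := by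
    cases n with
    | zero => simp
    | succ m =>
      have e := S.c2 m a b (N + 1) (fun j hj => hN (m + j) (by omega))
      rw [show (m + 1 : ℕ) - 1 = m from rfl, e, Finset.smul_sum]
      apply Finset.sum_congr rfl
      intro j _
      rw [smul_smul]
      congr 1
  rw [e1', e2, e3, map_sum]
  have e4 : ∑ j ∈ range N, S.D (((-1 : ℂ) ^ (j + n + 1) * ((j.factorial : ℂ))⁻¹) •
        (⇑S.D)^[j] (S.mul (n + j) b a))
      = ∑ j ∈ range N, ((-1 : ℂ) ^ (j + n + 1) * ((j.factorial : ℂ))⁻¹) •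
        (⇑S.D)^[j + 1] (S.mul (n + j) b a) := by
    apply Finset.sum_congr rfl
    intro j _
    rw [map_smul, Function.iterate_succ_apply']
  rw [e4]
  rw [Finset.sum_range_succ'
    (fun j => ((-1 : ℂ) ^ (j + n + 1) * ((j.factorial : ℂ))⁻¹ * (-((n + j : ℕ) : ℂ))) •
      (⇑S.D)^[j] (S.mul (n + j - 1) b a)) N]
  rw [Finset.sum_range_succ'
    (fun j => ((n : ℂ) * ((-1 : ℂ) ^ (j + n) * ((j.factorial : ℂ))⁻¹)) •
      (⇑S.D)^[j] (S.mul (n - 1 + j) b a)) N]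
  have h0 : ((-1 : ℂ) ^ (0 + n + 1) * ((Nat.factorial 0 : ℂ))⁻¹ * (-((n + 0 : ℕ) : ℂ))) •
        (⇑S.D)^[0] (S.mul (n + 0 - 1) b a)
      = ((n : ℂ) * ((-1 : ℂ) ^ (0 + n) * ((Nat.factorial 0 : ℂ))⁻¹)) •
        (⇑S.D)^[0] (S.mul (n - 1 + 0) b a) := by
    congr 1
    · push_cast; ring
  have hterm : ∀ j ∈ range N,
      ((-1 : ℂ) ^ ((j + 1) + n + 1) * (((j + 1).factorial : ℂ))⁻¹ * (-((n + (j + 1) : ℕ) : ℂ))) •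
          (⇑S.D)^[j + 1] (S.mul (n + (j + 1) - 1) b a)
        = ((-1 : ℂ) ^ (j + n + 1) * ((j.factorial : ℂ))⁻¹) •
            (⇑S.D)^[j + 1] (S.mul (n + j) b a)
          + ((n : ℂ) * ((-1 : ℂ) ^ ((j + 1) + n) * (((j + 1).factorial : ℂ))⁻¹)) •
            (⇑S.D)^[j + 1] (S.mul (n - 1 + (j + 1)) b a) := by
    intro j _
    have hf : (((j + 1).factorial : ℕ) : ℂ) = ((j : ℂ) + 1) * ((j.factorial : ℕ) : ℂ) := by
      rw [Nat.factorial_succ]; push_cast; ring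
    have hfne : ((j.factorial : ℕ) : ℂ) ≠ 0 :=
      Nat.cast_ne_zero.mpr (Nat.factorial_ne_zero j)
    have hj1ne : ((j : ℂ) + 1) ≠ 0 := by
      exact Nat.cast_add_one_ne_zero j
    cases n with
    | zero =>
      simp only [Nat.cast_zero, zero_mul, zero_smul, add_zero]
      rw [show (0 : ℕ) + (j + 1) - 1 = 0 + j from by omega]
      congr 1
      rw [hf]
      field_simp
      push_cast
      ring
    | succ m =>
      rw [show (m + 1) + (j + 1) - 1 = (m + 1) + j from by omega,
        show (m + 1) - 1 + (j + 1) = (m + 1) + j from by omega, ← add_smul]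
      congr 1
      rw [hf]
      field_simp
      push_cast
      ring
  rw [Finset.sum_congr rfl hterm, Finset.sum_add_distrib, h0]
  abel

end mulD

namespace VirAux

variable {U : Type*} [AddCommGroup U] [Module ℂ U]
variable {A : Module.End ℂ U} {π : ℕ → Module.End ℂ U}

/-- The commutator formula (M1) as a predicate on pairs of elements. -/
def P (S : ConformalAlgebra (ℕ →₀ ℂ)) (A : Module.End ℂ U) (π : ℕ → Module.End ℂ U)
    (a b : ℕ →₀ ℂ) : Prop :=
  ∀ (m n : ℕ) (v : ℕ →₀ U),
    act A π m a (act A π n b v) - act A π n b (act A π m a v)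
      = ∑ j ∈ range (m + 1), ((m.choose j : ℂ)) • act A π (m + n - j) (S.mul j a b) v

variable {S : ConformalAlgebra (ℕ →₀ ℂ)}

lemma P_zero_left (b : ℕ →₀ ℂ) : P S A π 0 b := by
  intro m n v
  simp

lemma P_zero_right (a : ℕ →₀ ℂ) : P S A π a 0 := by
  intro m n v
  simp

lemma P_add_left {a a' b : ℕ →₀ ℂ} (h : P S A π a b) (h' : P S A π a' b) :
    P S A π (a + a') b := by
  intro m n v
  have h1 := h m n v
  have h2 := h' m n v
  simp only [map_add, LinearMap.add_apply, smul_add, Finset.sum_add_distrib]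
  linear_combination (norm := module) h1 + h2

lemma P_add_right {a b b' : ℕ →₀ ℂ} (h : P S A π a b) (h' : P S A π a b') :
    P S A π a (b + b') := by
  intro m n v
  have h1 := h m n v
  have h2 := h' m n v
  simp only [map_add, LinearMap.add_apply, smul_add, Finset.sum_add_distrib]
  linear_combination (norm := module) h1 + h2

lemma P_smul_left {a b : ℕ →₀ ℂ} (c : ℂ) (h : P S A π a b) : P S A π (c • a) b := by
  intro m n v
  have h1 := h m n v
  simp only [map_smul, LinearMap.smul_apply]
  rw [← smul_sub, h1, Finset.smul_sum]
  apply Finset.sum_congr rfl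
  intro j _
  rw [smul_comm]

lemma P_smul_right {a b : ℕ →₀ ℂ} (c : ℂ) (h : P S A π a b) : P S A π a (c • b) := by
  intro m n v
  have h1 := h m n v
  simp only [map_smul, LinearMap.smul_apply]
  rw [← smul_sub, h1, Finset.smul_sum]
  apply Finset.sum_congr rfl
  intro j _
  rw [smul_comm]

section withS
variable (hSD : S.D = shiftD ℂ)
include hSD

lemma hDact (K : ℕ) (x : ℕ →₀ ℂ) (w : ℕ →₀ U) :
    act A π K (S.D x) w = -(K : ℂ) • act A π (K - 1) x w := by
  rw [hSD, act_shift, LinearMap.smul_apply]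

lemma PD_left {a b : ℕ →₀ ℂ} (h : P S A π a b) : P S A π (S.D a) b := by
  intro m n v
  rcases m with _ | m'
  · rw [Finset.sum_range_one]
    rw [hDact hSD, hDact hSD, S.c1]
    simp
  · have lhs_eq : act A π (m' + 1) (S.D a) (act A π n b v)
        - act A π n b (act A π (m' + 1) (S.D a) v)
        = -((m' + 1 : ℕ) : ℂ) • (act A π m' a (act A π n b v) - act A π n b (act A π m' a v)) := by
      rw [hDact hSD, hDact hSD, map_smul, smul_sub]
      simp only [Nat.add_sub_cancel]
    rw [lhs_eq, h m' n v, Finset.smul_sum]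
    rw [Finset.sum_range_succ'
      (fun j => (((m' + 1).choose j : ℂ)) • act A π (m' + 1 + n - j) (S.mul j (S.D a) b) v)
      (m' + 1)]
    have last0 : (((m' + 1).choose 0 : ℂ)) • act A π (m' + 1 + n - 0) (S.mul 0 (S.D a) b) v
        = 0 := by
      rw [S.c1]
      simp
    rw [last0, add_zero]
    apply Finset.sum_congr rfl
    intro j hj
    rw [S.c1, map_smul, LinearMap.smul_apply, smul_smul, smul_smul]
    rw [show m' + 1 + n - (j + 1) = m' + n - j from by omega]
    congr 1
    have hc := Nat.add_one_mul_choose_eq m' j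
    have hc' : (((m' + 1) * m'.choose j : ℕ) : ℂ) = (((m' + 1).choose (j + 1) * (j + 1) : ℕ) : ℂ) := by
      exact_mod_cast congrArg (Nat.cast (R := ℂ)) hc
    push_cast at hc' ⊢
    linear_combination -hc'

lemma PD_right {a b : ℕ →₀ ℂ} (h : P S A π a b) : P S A π a (S.D b) := by
  intro m n v
  have rhs_eq : ∀ j ∈ range (m + 1),
      ((m.choose j : ℂ)) • act A π (m + n - j) (S.mul j a (S.D b)) v
        = ((m.choose j : ℂ) * (-((m + n - j : ℕ) : ℂ))) • act A π (m + n - j - 1) (S.mul j a b) v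
          + ((m.choose j * j : ℕ) : ℂ) • act A π (m + n - j) (S.mul (j - 1) a b) v := by
    intro j hj
    rw [mulD, map_add, map_smul, LinearMap.add_apply, LinearMap.smul_apply, hDact hSD,
      smul_add, smul_smul, smul_smul]
    congr 2
    push_cast
    ring
  rw [Finset.sum_congr rfl rhs_eq, Finset.sum_add_distrib]
  rw [Finset.sum_range_succ'
    (fun j => ((m.choose j * j : ℕ) : ℂ) • act A π (m + n - j) (S.mul (j - 1) a b) v) m]
  simp only [Nat.mul_zero, Nat.cast_zero, zero_smul, add_zero, Nat.add_sub_cancel]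
  have reidx : ∀ j ∈ range m,
      ((m.choose (j + 1) * (j + 1) : ℕ) : ℂ) • act A π (m + n - (j + 1)) (S.mul j a b) v
        = ((m.choose j * (m - j) : ℕ) : ℂ) • act A π (m + n - (j + 1)) (S.mul j a b) v := by
    intro j _
    rw [Nat.choose_succ_right_eq]
  rw [Finset.sum_congr rfl reidx]
  have extend : ∑ j ∈ range m,
        ((m.choose j * (m - j) : ℕ) : ℂ) • act A π (m + n - (j + 1)) (S.mul j a b) v
      = ∑ j ∈ range (m + 1),
        ((m.choose j * (m - j) : ℕ) : ℂ) • act A π (m + n - (j + 1)) (S.mul j a b) v := by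
    rw [Finset.sum_range_succ, Nat.sub_self, Nat.mul_zero, Nat.cast_zero, zero_smul, add_zero]
  rw [extend, ← Finset.sum_add_distrib]
  rcases n with _ | n'
  · -- n = 0 : both sides vanish
    have lhs0 : ∀ w : ℕ →₀ U, act A π 0 (S.D b) w = 0 := by
      intro w
      rw [hDact hSD]
      simp
    rw [lhs0, lhs0, map_zero, zero_sub, neg_zero]
    symm
    apply Finset.sum_eq_zero
    intro j hj
    have hjm : j ≤ m := by
      have := Finset.mem_range.mp hj
      omega
    rw [show m + 0 - j - 1 = m - (j + 1) from by omega,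
      show m + 0 - (j + 1) = m - (j + 1) from by omega, ← add_smul]
    have c2 : ((m - j : ℕ) : ℂ) = (m : ℂ) - (j : ℂ) := Nat.cast_sub hjm
    have c3 : ((m + 0 - j : ℕ) : ℂ) = (m : ℂ) - (j : ℂ) := by
      rw [show m + 0 - j = m - j from by omega]
      exact c2
    rw [show (↑(m.choose j) * -↑(m + 0 - j) + ↑(m.choose j * (m - j)) : ℂ) = 0 from by
      push_cast [c2, c3]; ring]
    rw [zero_smul]
  · have lhs_eq : act A π m a (act A π (n' + 1) (S.D b) v)
        - act A π (n' + 1) (S.D b) (act A π m a v)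
        = -((n' + 1 : ℕ) : ℂ) •
            (act A π m a (act A π n' b v) - act A π n' b (act A π m a v)) := by
      rw [hDact hSD, hDact hSD, map_smul, smul_sub]
      simp only [Nat.add_sub_cancel]
    rw [lhs_eq, h m n' v, Finset.smul_sum]
    apply Finset.sum_congr rfl
    intro j hj
    rw [show m + (n' + 1) - j - 1 = m + n' - j from by omega,
      show m + (n' + 1) - (j + 1) = m + n' - j from by omega]
    rw [smul_smul, ← add_smul]
    congr 1
    have hjm : j ≤ m := by
      have := Finset.mem_range.mp hj
      omega
    have c1 : ((m + (n' + 1) - j : ℕ) : ℂ) = (m : ℂ) + (n' : ℂ) + 1 - (j : ℂ) := by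
      have : (m + (n' + 1) - j : ℕ) = m + n' + 1 - j := by omega
      rw [this, Nat.cast_sub (by omega)]
      push_cast
      ring
    have c2 : ((m - j : ℕ) : ℂ) = (m : ℂ) - (j : ℂ) := Nat.cast_sub hjm
    push_cast [c1, c2]
    ring

end withS

end VirAux

namespace VirAux

variable {U : Type*} [AddCommGroup U] [Module ℂ U]
variable {A : Module.End ℂ U} {π : ℕ → Module.End ℂ U}
variable {S : ConformalAlgebra (ℕ →₀ ℂ)}

section base
variable (hπ : ∀ i j : ℕ, π i * π j - π j * π i = ((i : ℂ) - (j : ℂ)) • π (i + j))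
  (hA : ∀ j : ℕ, A * π j = π j * A)
  (hSD : S.D = shiftD ℂ) (h0 : S.mul 0 virL virL = S.D virL)
  (h1 : S.mul 1 virL virL = (2 : ℂ) • virL) (hj : ∀ j > 1, S.mul j virL virL = 0)
include hπ hA hSD h0 h1 hj

lemma P_base : P S A π virL virL := by
  intro m n v
  rw [act_virL, act_virL, comm_T hπ hA]
  rcases m with _ | m'
  · rw [Finset.sum_range_one, h0, hSD,
      show shiftD ℂ virL = Finsupp.single 1 1 from by rw [virL, shiftD_single],
      act_single]
    simp only [Nat.zero_add, Nat.sub_zero, Nat.descFactorial_one, Nat.choose_self,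
      Nat.cast_one, one_smul, one_mul, pow_one, LinearMap.smul_apply, Nat.cast_zero]
    module
  · rw [Finset.sum_range_succ', Finset.sum_range_succ']
    have hz : ∀ i ∈ range m',
        ((m' + 1).choose (i + 1 + 1) : ℂ) •
          act A π (m' + 1 + n - (i + 1 + 1)) (S.mul (i + 1 + 1) virL virL) v = 0 := by
      intro i _
      rw [hj (i + 1 + 1) (by omega)]
      simp
    rw [Finset.sum_eq_zero hz, zero_add]
    simp only [Nat.zero_add, Nat.sub_zero]
    rw [h1, h0, hSD,
      show shiftD ℂ virL = Finsupp.single 1 1 from by rw [virL, shiftD_single],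
      act_single, map_smul]
    simp only [Nat.choose_one_right, Nat.choose_zero_right, Nat.cast_one, one_smul, one_mul,
      pow_one, Nat.descFactorial_one, LinearMap.smul_apply]
    rw [act_virL]
    push_cast
    module

lemma P_single (p q : ℕ) : P S A π (Finsupp.single p (1 : ℂ)) (Finsupp.single q (1 : ℂ)) := by
  have key : ∀ q, P S A π virL (Finsupp.single q (1 : ℂ)) := by
    intro q
    induction q with
    | zero =>
      rw [show Finsupp.single 0 (1 : ℂ) = virL from rfl]
      exact P_base hπ hA hSD h0 h1 hj
    | succ q ih =>
      rw [← shiftD_single, ← hSD]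
      exact PD_right hSD ih
  induction p with
  | zero =>
    rw [show Finsupp.single 0 (1 : ℂ) = virL from rfl]
    exact key q
  | succ p ih =>
    rw [← shiftD_single, ← hSD]
    exact PD_left hSD ih

lemma P_all (a b : ℕ →₀ ℂ) : P S A π a b := by
  induction a using Finsupp.induction_linear with
  | zero => exact P_zero_left b
  | add x y hx hy => exact P_add_left hx hy
  | single p c =>
    induction b using Finsupp.induction_linear with
    | zero => exact P_zero_right _
    | add x y hx hy => exact P_add_right hx hy
    | single q c' =>
      rw [show Finsupp.single p c = c • Finsupp.single p (1 : ℂ) from by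
            rw [Finsupp.smul_single, smul_eq_mul, mul_one],
          show Finsupp.single q c' = c' • Finsupp.single q (1 : ℂ) from by
            rw [Finsupp.smul_single, smul_eq_mul, mul_one]]
      exact P_smul_left c (P_smul_right c' (P_single hπ hA hSD h0 h1 hj p q))

end base

end VirAux

/-- Let `U` be a finite-dimensional ℂ-vector space, `π` a representation of
`Vir_{≥0} = span{L_j : j ≥ 0}` on `U`, and `A` an endomorphism of `U` commuting with all
`π(L_j)`. Then `ℂ[∂] ⊗ U` with `L_{(0)}u = (∂ + A)u`, `L_{(j)}u = π(L_{j-1})u` for `j ≥ 1`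
is a module over the Virasoro conformal algebra, i.e. satisfies (M0)-(M2). -/
theorem virasoro_conformal_module_exists
    (S : ConformalAlgebra (ℕ →₀ ℂ))
    (hSD : S.D = shiftD ℂ) (h0 : S.mul 0 virL virL = S.D virL)
    (h1 : S.mul 1 virL virL = (2 : ℂ) • virL) (hj : ∀ j > 1, S.mul j virL virL = 0)
    (U : Type*) [AddCommGroup U] [Module ℂ U] [FiniteDimensional ℂ U]
    (π : ℕ → Module.End ℂ U)
    (hπ : ∀ i j : ℕ, π i * π j - π j * π i = ((i : ℂ) - (j : ℂ)) • π (i + j))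
    (A : Module.End ℂ U) (hA : ∀ j : ℕ, A * π j = π j * A) :
    ∃ CM : ConformalModule S (ℕ →₀ U),
      CM.DM = shiftD U ∧
      (∀ u : U, CM.act 0 virL (Finsupp.single 0 u)
        = CM.DM (Finsupp.single 0 u) + Finsupp.single 0 (A u)) ∧
      ∀ j ≥ 1, ∀ u : U, CM.act j virL (Finsupp.single 0 u)
        = Finsupp.single 0 (π (j - 1) u) := by
  obtain ⟨J, hJ⟩ := pi_vanish π hπ
  refine ⟨⟨shiftD U, VirAux.act A π, ?_, ?_, ?_, ?_⟩, rfl, ?_, ?_⟩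
  · -- m0
    intro a v
    exact ⟨(a.support.sup id) + (v.support.sup id) + J + 1,
      fun n hn => VirAux.act_eq_zero hJ a v n hn⟩
  · -- m1
    intro m n a b v
    exact VirAux.P_all hπ hA hSD h0 h1 hj a b m n v
  · -- m2a
    intro n a v
    exact VirAux.hDact hSD n a v
  · -- m2b
    intro n a v
    exact VirAux.act_m2b n a v
  · -- act 0 on constants
    intro u
    rw [VirAux.act_virL, VirAux.T_single, VirAux.f_zero, VirAux.g_zero_apply,
      VirAux.shiftD_single]
  · -- act j, j ≥ 1, on constants
    intro j hjge u
    obtain ⟨j', rfl⟩ : ∃ j', j = j' + 1 := ⟨j - 1, by omega⟩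
    rw [VirAux.act_virL, VirAux.T_single, VirAux.f_zero, VirAux.g_succ_apply]
    simp
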